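/- arXiv:2510.05666 — 2 statements merged into one kernel-verified Lean document; each statement's English description precedes it below -/
import Mathlib

section
/- Let 4 ≤ 2k ≤ n, and let G be a collection of subsets of [n] each of size at most k such that F(n,k,G) is intersecting and nonempty. Then for every G ∈ G that generates a nonempty F(G), the minimum element of G satisfies min(G) ≤ k. -/
open Finset

/-- 1-indexed i-th smallest element of a finset of naturals (0 if out of range). -/
def nth (A : Finset ℕ) (i : ℕ) : ℕ := (A.sort (· ≤ ·)).getD (i - 1) 0


lemma sorted_add_le (l : List ℕ) (hl : l.Pairwise (· < ·)) (j d : ℕ) (h : j + d < l.length) :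
    l[j]'(by omega) + d ≤ l[j + d]'h := by
  induction d with
  | zero => simp
  | succ d ih =>
    have h1 : j + d < l.length := by omega
    have h2 := hl.rel_get_of_lt (a := ⟨j + d, h1⟩) (b := ⟨j + d + 1, by omega⟩) (by simp)
    simp only [List.get_eq_getElem] at h2
    have := ih h1
    have e : l[j + (d+1)]'h = l[j + d + 1]'(by omega) := rfl
    rw [e]
    omega

lemma nth_mem (A : Finset ℕ) (i : ℕ) (h1 : 1 ≤ i) (h2 : i ≤ A.card) : nth A i ∈ A := by
  have hlen : i - 1 < (A.sort (· ≤ ·)).length := by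
    rw [Finset.length_sort]; omega
  rw [nth, List.getD_eq_getElem _ _ hlen]
  exact (Finset.mem_sort _).mp (List.getElem_mem hlen)

lemma nth_ge (A : Finset ℕ) (hA : A.Nonempty) (i : ℕ) (h1 : 1 ≤ i) (h2 : i ≤ A.card) :
    A.min' hA + (i - 1) ≤ nth A i := by
  have hlen : (A.sort (· ≤ ·)).length = A.card := Finset.length_sort _
  have h0 : 0 + (i - 1) < (A.sort (· ≤ ·)).length := by omega
  have := sorted_add_le _ (A.sortedLT_sort.pairwise) 0 (i - 1) h0
  have hlen0 : 0 < (A.sort (· ≤ ·)).length := by omega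
  have hmin : (A.sort (· ≤ ·)).get ⟨0, hlen0⟩ = A.min' hA := Finset.sorted_zero_eq_min'
  simp only [List.get_eq_getElem] at hmin
  rw [nth, List.getD_eq_getElem _ _ (by omega : i - 1 < _)]
  simpa [hmin] using this

lemma nth_le_of_max (A : Finset ℕ) (m : ℕ) (hm : ∀ x ∈ A, x ≤ m) (i : ℕ)
    (h1 : 1 ≤ i) (h2 : i ≤ A.card) : nth A i + (A.card - i) ≤ m := by
  have hlen : (A.sort (· ≤ ·)).length = A.card := Finset.length_sort _
  have h0 : (i - 1) + (A.card - i) < (A.sort (· ≤ ·)).length := by omega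
  have := sorted_add_le _ (A.sortedLT_sort.pairwise) (i - 1) (A.card - i) h0
  have hmem : (A.sort (· ≤ ·))[(i-1) + (A.card - i)]'h0 ∈ A :=
    (Finset.mem_sort _).mp (List.getElem_mem h0)
  have := hm _ hmem
  rw [nth, List.getD_eq_getElem _ _ (by omega : i - 1 < _)]
  omega

/-- Elementwise order on finsets of equal size: `A ≤ B`. -/
def eLE (A B : Finset ℕ) : Prop :=
  A.card = B.card ∧ ∀ i, 1 ≤ i → i ≤ B.card → nth A i ≤ nth B i

/-- `A ⪯ B`: `|A| ≥ |B|` and the i-th smallest of `A` is ≤ the i-th smallest of `B` for `i ≤ |B|`. -/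
def preceq (A B : Finset ℕ) : Prop :=
  B.card ≤ A.card ∧ ∀ i, 1 ≤ i → i ≤ B.card → nth A i ≤ nth B i

/-- `μ_X(l) = |X ∩ [l]|`. -/
def mu (X : Finset ℕ) (l : ℕ) : ℕ := (X ∩ Finset.Icc 1 l).card

/-- `G ∼_si H` (within `[n]`): every `G' ≤ G` and `H' ≤ H` with `G', H' ⊆ [n]` intersect. -/
def sInt (n : ℕ) (G H : Finset ℕ) : Prop :=
  ∀ G' H' : Finset ℕ, G' ⊆ Finset.Icc 1 n → H' ⊆ Finset.Icc 1 n →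
    eLE G' G → eLE H' H → (G' ∩ H').Nonempty

/-- `F(n,k,𝒢)`: the k-subsets `S` of `[n]` with `S ⪯ G` for some `G ∈ 𝒢`. -/
def Fam (n k : ℕ) (𝒢 : Set (Finset ℕ)) : Set (Finset ℕ) :=
  {S | S ⊆ Finset.Icc 1 n ∧ S.card = k ∧ ∃ G ∈ 𝒢, preceq S G}

/-- A family is intersecting if every two members (possibly equal) intersect. -/
def IsIntersecting (𝒜 : Set (Finset ℕ)) : Prop :=
  ∀ A ∈ 𝒜, ∀ B ∈ 𝒜, (A ∩ B).Nonempty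

/-- The type of `G`: the largest `r` with `g_r < k + r`. -/
def typeOf (k : ℕ) (G : Finset ℕ) : ℕ :=
  ((Finset.range (G.card + 1)).filter fun r => 1 ≤ r ∧ nth G r < k + r).sup id

/-- `π(G) = {g_1, …, g_r}` where `r` is the type of `G`. -/
def piG (k : ℕ) (G : Finset ℕ) : Finset ℕ :=
  ((G.sort (· ≤ ·)).take (typeOf k G)).toFinset

theorem stmt11 (n k : ℕ) (h4 : 4 ≤ 2 * k) (hn : 2 * k ≤ n) (𝒢 : Set (Finset ℕ))
    (h𝒢 : ∀ G ∈ 𝒢, G ⊆ Finset.Icc 1 n ∧ G.card ≤ k)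
    (hint : IsIntersecting (Fam n k 𝒢)) (hne : (Fam n k 𝒢).Nonempty)
    (G : Finset ℕ) (hG : G ∈ 𝒢) (hGne : G.Nonempty) (hFG : (Fam n k {G}).Nonempty) :
    G.min' hGne ≤ k := by
  by_contra hlt
  push_neg at hlt
  -- every element of G is ≥ k+1
  have hk2 : 2 ≤ k := by omega
  have hGsub := (h𝒢 G hG).1
  have hGcard := (h𝒢 G hG).2
  -- nth G i ≥ k + i for 1 ≤ i ≤ G.card
  have hnthG : ∀ i, 1 ≤ i → i ≤ G.card → k + i ≤ nth G i := by
    intro i hi1 hi2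
    have := nth_ge G hGne i hi1 hi2
    omega
  set T1 : Finset ℕ := Finset.Icc 1 k with hT1
  set T2 : Finset ℕ := Finset.Icc (k+1) (2*k) with hT2
  have hc1 : T1.card = k := by rw [hT1, Nat.card_Icc]; omega
  have hc2 : T2.card = k := by rw [hT2, Nat.card_Icc]; omega
  have hmem1 : T1 ∈ Fam n k 𝒢 := by
    refine ⟨fun x hx => ?_, hc1, G, hG, hGcard.trans_eq hc1.symm, fun i hi1 hi2 => ?_⟩
    · simp only [hT1, Finset.mem_Icc] at hx ⊢; omega
    · have h1 := nth_mem T1 i hi1 (by omega)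
      have h2 := hnthG i hi1 hi2
      simp only [hT1, Finset.mem_Icc] at h1 ⊢
      omega
  have hmem2 : T2 ∈ Fam n k 𝒢 := by
    refine ⟨fun x hx => ?_, hc2, G, hG, hGcard.trans_eq hc2.symm, fun i hi1 hi2 => ?_⟩
    · simp only [hT2, Finset.mem_Icc] at hx ⊢; omega
    · have h1 := nth_le_of_max T2 (2*k) (fun x hx => by
        simp only [hT2, Finset.mem_Icc] at hx; omega) i hi1 (by omega)
      have h2 := hnthG i hi1 hi2
      omega
  have := hint T1 hmem1 T2 hmem2
  obtain ⟨x, hx⟩ := this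
  simp only [Finset.mem_inter, hT1, hT2, Finset.mem_Icc] at hx
  omega
end

section
/- Let 4 ≤ 2k ≤ n and let G', H' ⊆ [n] have sizes at most k with min(G') ≤ k, min(H') ≤ k. Suppose μ_{G'}(l) + μ_{H'}(l) > l for some l ∈ [n]. If G' has type r (the largest index with g_r < k + r), then any such l satisfies l ≤ k + r − 1, and moreover μ_{π(G')}(l) = μ_{G'}(l), so that μ_{π(G')}(l) + μ_{π(H')}(l) > l. -/
open Finset

lemma filter_le_eq_take (l : ℕ) : ∀ (s : List ℕ), s.Pairwise (· ≤ ·) →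
    s.filter (· ≤ l) = s.take ((s.filter (· ≤ l)).length)
  | [], _ => rfl
  | x :: t, h => by
    rcases List.pairwise_cons.mp h with ⟨hx, ht⟩
    by_cases hxl : x ≤ l
    · have ih := filter_le_eq_take l t ht
      simp only [List.filter_cons, hxl, decide_true, List.length_cons, List.take_succ_cons,
        if_true, List.length]
      rw [← ih]
    · have hnil : t.filter (· ≤ l) = [] := by
        rw [List.filter_eq_nil_iff]
        intro a ha
        have := hx a ha
        simp only [decide_eq_true_eq]
        omega
      simp [List.filter_cons, hxl, hnil]

lemma mu_le_card (X : Finset ℕ) (l : ℕ) : mu X l ≤ X.card :=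
  Finset.card_le_card Finset.inter_subset_left

lemma mu_le (X : Finset ℕ) (l : ℕ) : mu X l ≤ l := by
  have h : (X ∩ Finset.Icc 1 l).card ≤ (Finset.Icc 1 l).card :=
    Finset.card_le_card Finset.inter_subset_right
  simpa [mu, Nat.card_Icc] using h

lemma key (k l : ℕ) (X : Finset ℕ) (hX : ∀ x ∈ X, 1 ≤ x)
    (ha1 : 1 ≤ mu X l) (hal : l < k + mu X l) :
    mu X l ≤ typeOf k X ∧ mu (piG k X) l = mu X l := by
  set s := X.sort (· ≤ ·) with hs
  have hsort : s.Pairwise (· ≤ ·) := Finset.pairwise_sort _ _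
  have hnodup : s.Nodup := Finset.sort_nodup _ _
  have hlen : s.length = X.card := Finset.length_sort _
  have hsF : s.toFinset = X := Finset.sort_toFinset _ _
  have hmu : mu X l = (s.filter (· ≤ l)).length := by
    have h1 : X ∩ Finset.Icc 1 l = X.filter (fun x => decide (x ≤ l)) := by
      ext x
      simp only [Finset.mem_inter, Finset.mem_Icc, Finset.mem_filter, decide_eq_true_eq]
      constructor
      · rintro ⟨h1, _, h3⟩; exact ⟨h1, h3⟩
      · rintro ⟨h1, h2⟩; exact ⟨h1, hX x h1, h2⟩
    have h2 : (s.filter (· ≤ l)).toFinset = X.filter (fun x => decide (x ≤ l)) := by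
      rw [List.toFinset_filter, hsF]
    have h3 : (s.filter (· ≤ l)).toFinset.card = (s.filter (· ≤ l)).length :=
      List.toFinset_card_of_nodup (hnodup.filter _)
    rw [mu, h1, ← h2, h3]
  set a := mu X l with hadef
  have hale : a ≤ s.length := hmu ▸ List.length_filter_le _ _
  have htake : s.filter (· ≤ l) = s.take a := hmu ▸ filter_le_eq_take l s hsort
  have hidx : a - 1 < s.length := by omega
  have hnth : nth X a ≤ l := by
    have hmem : s[a-1] ∈ s.take a := by
      have h2 : a - 1 < (s.take a).length := by
        rw [List.length_take]; omega
      rw [← List.getElem_take (j := a) (i := a - 1) (h := h2)]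
      exact List.getElem_mem h2
    have hle : s[a-1] ≤ l := by
      have hm := htake ▸ hmem
      have h' := List.of_mem_filter hm
      simpa using h'
    have heq : nth X a = s[a-1] := by
      simp [nth, ← hs, List.getD_eq_getElem?_getD, List.getElem?_eq_getElem hidx]
    omega
  have hr : a ≤ typeOf k X := by
    have hmemf : a ∈ (Finset.range (X.card + 1)).filter
        (fun r => 1 ≤ r ∧ nth X r < k + r) := by
      simp only [Finset.mem_filter, Finset.mem_range]
      exact ⟨by omega, ha1, by omega⟩
    exact Finset.le_sup (f := id) hmemf
  refine ⟨hr, ?_⟩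
  have hsub : piG k X ∩ Finset.Icc 1 l = X ∩ Finset.Icc 1 l := by
    ext x
    simp only [Finset.mem_inter, piG, List.mem_toFinset, ← hs]
    constructor
    · rintro ⟨h1, h2⟩
      exact ⟨by rw [← hsF]; exact List.mem_toFinset.mpr (List.take_subset _ _ h1), h2⟩
    · rintro ⟨h1, h2⟩
      have hxl : x ≤ l := (Finset.mem_Icc.mp h2).2
      have hxs : x ∈ s := by rw [← List.mem_toFinset, hsF]; exact h1
      have hxf : x ∈ s.filter (· ≤ l) := List.mem_filter.mpr ⟨hxs, by simpa using hxl⟩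
      have hxt : x ∈ s.take a := htake ▸ hxf
      have hmt : x ∈ s.take (typeOf k X) := by
        have heq : s.take a = (s.take (typeOf k X)).take a := by
          rw [List.take_take, Nat.min_eq_left hr]
        exact List.take_subset _ _ (heq ▸ hxt)
      exact ⟨hmt, h2⟩
  simp only [hadef, mu, hsub]


theorem stmt14 (n k : ℕ) (h4 : 4 ≤ 2 * k) (hn : 2 * k ≤ n) (G' H' : Finset ℕ)
    (hG : G' ⊆ Finset.Icc 1 n) (hH : H' ⊆ Finset.Icc 1 n)
    (hGc : G'.card ≤ k) (hHc : H'.card ≤ k)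
    (hGm : ∃ x ∈ G', x ≤ k) (hHm : ∃ x ∈ H', x ≤ k)
    (l : ℕ) (hl : l ∈ Finset.Icc 1 n) (h : l < mu G' l + mu H' l) :
    l ≤ k + typeOf k G' - 1 ∧ mu (piG k G') l = mu G' l ∧
      l < mu (piG k G') l + mu (piG k H') l := by
  have hG1 : ∀ x ∈ G', 1 ≤ x := fun x hx => (Finset.mem_Icc.mp (hG hx)).1
  have hH1 : ∀ x ∈ H', 1 ≤ x := fun x hx => (Finset.mem_Icc.mp (hH hx)).1
  have hbk : mu H' l ≤ k := le_trans (mu_le_card _ _) hHc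
  have hak : mu G' l ≤ k := le_trans (mu_le_card _ _) hGc
  have hbl : mu H' l ≤ l := mu_le _ _
  have hal2 : mu G' l ≤ l := mu_le _ _
  have ha1 : 1 ≤ mu G' l := by omega
  have hb1 : 1 ≤ mu H' l := by omega
  have hkG : l < k + mu G' l := by omega
  have hkH : l < k + mu H' l := by omega
  obtain ⟨hrG, hmuG⟩ := key k l G' hG1 ha1 hkG
  obtain ⟨hrH, hmuH⟩ := key k l H' hH1 hb1 hkH
  refine ⟨by omega, hmuG, by rw [hmuG, hmuH]; exact h⟩
end
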